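/- In one dimension: if X ~ N(0,σ²) and S ⊆ ℝ is measurable with P(X ∈ S) ≥ p, then P(X + δ ∈ S) ≥ Φ(Φ⁻¹(p) − δ/σ) for any δ ≥ 0, where Φ is the standard Gaussian CDF. -/

import Mathlib

open MeasureTheory ProbabilityTheory Real Set Filter

/-- Standard Gaussian CDF. -/
noncomputable def Phi (t : ℝ) : ℝ :=
  ∫ u in Set.Iic t, (Real.sqrt (2 * Real.pi))⁻¹ * Real.exp (-u ^ 2 / 2)

/-- Inverse of the standard Gaussian CDF. -/
noncomputable def PhiInv : ℝ → ℝ := Function.invFun Phi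

/-- Isotropic Gaussian measure `N(x, σ²I)` on `ℝᵈ`. -/
noncomputable def gaussPi (d : ℕ) (x : EuclideanSpace ℝ (Fin d)) (σ : NNReal) :
    Measure (EuclideanSpace ℝ (Fin d)) :=
  Measure.map (MeasurableEquiv.toLp 2 (Fin d → ℝ))
    (Measure.pi fun i => gaussianReal (x i) (σ ^ 2))

lemma gaussianPDFReal_zero_one (u : ℝ) :
    gaussianPDFReal 0 1 u = (Real.sqrt (2 * Real.pi))⁻¹ * Real.exp (-u ^ 2 / 2) := by
  simp [gaussianPDFReal]

lemma gauss_toReal (m : ℝ) {v : NNReal} (hv : v ≠ 0) (s : Set ℝ) :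
    ((gaussianReal m v) s).toReal = ∫ x in s, gaussianPDFReal m v x := by
  rw [gaussianReal_apply_eq_integral m hv s,
    ENNReal.toReal_ofReal (integral_nonneg fun x => gaussianPDFReal_nonneg _ _ _)]

lemma Phi_eq_toReal (t : ℝ) : Phi t = ((gaussianReal 0 1) (Iic t)).toReal := by
  rw [gauss_toReal 0 one_ne_zero]
  unfold Phi
  exact setIntegral_congr_fun measurableSet_Iic fun u _ => (gaussianPDFReal_zero_one u).symm

lemma Phi_eq_cdf : Phi = cdf (gaussianReal 0 1) := by
  funext t
  rw [Phi_eq_toReal, cdf_eq_real]; rfl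

lemma Phi_tendsto_atTop : Tendsto Phi atTop (nhds 1) := by
  rw [Phi_eq_cdf]; exact tendsto_cdf_atTop _

lemma Phi_tendsto_atBot : Tendsto Phi atBot (nhds 0) := by
  rw [Phi_eq_cdf]; exact tendsto_cdf_atBot _

lemma Phi_sub_Phi {s t : ℝ} (hst : s ≤ t) :
    Phi t - Phi s = ∫ u in Set.Ioc s t, (Real.sqrt (2 * Real.pi))⁻¹ * Real.exp (-u ^ 2 / 2) := by
  have hint : Integrable (fun u : ℝ => (Real.sqrt (2 * Real.pi))⁻¹ * Real.exp (-u ^ 2 / 2)) :=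
    (integrable_gaussianPDFReal 0 1).congr
      (Filter.Eventually.of_forall fun u => gaussianPDFReal_zero_one u)
  have hunion : Set.Iic s ∪ Set.Ioc s t = Set.Iic t := Iic_union_Ioc_eq_Iic hst
  have := setIntegral_union (f := fun u : ℝ => (Real.sqrt (2 * Real.pi))⁻¹ * Real.exp (-u ^ 2 / 2))
    (s := Set.Iic s) (t := Set.Ioc s t)
    (Iic_disjoint_Ioc le_rfl) measurableSet_Ioc hint.integrableOn hint.integrableOn
  rw [hunion] at this
  simp only [Phi]
  rw [this]; ring

lemma Phi_continuous : Continuous Phi := by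
  set C : ℝ := (Real.sqrt (2 * Real.pi))⁻¹ with hC
  have hC0 : 0 ≤ C := inv_nonneg.2 (Real.sqrt_nonneg _)
  have key : ∀ {s t : ℝ}, s ≤ t → Phi t - Phi s ≤ C * (t - s) := by
    intro s t hst
    rw [Phi_sub_Phi hst]
    calc ∫ u in Set.Ioc s t, C * Real.exp (-u ^ 2 / 2)
        ≤ ∫ _ in Set.Ioc s t, C := by
          refine setIntegral_mono_on ?_ (integrableOn_const (by simp))
            measurableSet_Ioc ?_
          · exact ((integrable_gaussianPDFReal 0 1).congr
              (Filter.Eventually.of_forall fun u => gaussianPDFReal_zero_one u)).integrableOn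
          · intro x _
            have : Real.exp (-x ^ 2 / 2) ≤ 1 := by
              rw [Real.exp_le_one_iff]
              nlinarith [sq_nonneg x]
            nlinarith
      _ = C * (t - s) := by
          rw [setIntegral_const, Real.volume_real_Ioc_of_le hst,
            smul_eq_mul]
          ring
  have nonneg : ∀ {s t : ℝ}, s ≤ t → 0 ≤ Phi t - Phi s := by
    intro s t hst
    rw [Phi_sub_Phi hst]
    exact integral_nonneg fun u => by positivity
  refine LipschitzWith.continuous (K := Real.toNNReal C) ?_
  refine LipschitzWith.of_dist_le_mul fun a b => ?_
  rw [Real.dist_eq, Real.dist_eq, Real.coe_toNNReal _ hC0]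
  rcases le_total a b with hab | hab
  · rw [abs_of_nonpos (by linarith [nonneg hab]), abs_of_nonpos (by linarith)]
    have := key hab; linarith
  · rw [abs_of_nonneg (by linarith [nonneg hab]), abs_of_nonneg (by linarith)]
    have := key hab; linarith

lemma Phi_surj {p : ℝ} (hp : p ∈ Set.Ioo (0:ℝ) 1) : ∃ t, Phi t = p := by
  obtain ⟨a, ha⟩ : ∃ a, Phi a < p := (Phi_tendsto_atBot.eventually_lt_const hp.1).exists
  obtain ⟨b, hb⟩ : ∃ b, p < Phi b := (Phi_tendsto_atTop.eventually_const_lt hp.2).exists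
  have := intermediate_value_univ a b Phi_continuous (Set.mem_Icc.2 ⟨ha.le, hb.le⟩)
  exact this

lemma Phi_PhiInv {p : ℝ} (hp : p ∈ Set.Ioo (0:ℝ) 1) : Phi (PhiInv p) = p :=
  Function.invFun_eq (Phi_surj hp)

lemma gauss_Iic (σ : NNReal) (hσ : 0 < σ) (m t : ℝ) :
    ((gaussianReal m (σ ^ 2)) (Iic t)).toReal = Phi ((t - m) / σ) := by
  have hσR : (0:ℝ) < σ := hσ
  have hv : (σ ^ 2 : NNReal) ≠ 0 := pow_ne_zero 2 hσ.ne'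
  have h1 : Measure.map (fun x : ℝ => (σ:ℝ) * x) (gaussianReal 0 1) = gaussianReal 0 (σ ^ 2) := by
    rw [gaussianReal_map_const_mul]
    congr 1
    · ring
    · ext; push_cast; ring
  have h2 : Measure.map (· + m) (gaussianReal 0 (σ ^ 2)) = gaussianReal m (σ ^ 2) := by
    rw [gaussianReal_map_add_const, zero_add]
  rw [← h2, Measure.map_apply (measurable_add_const m) measurableSet_Iic]
  have hpre1 : (· + m) ⁻¹' Iic t = Iic (t - m) := by
    ext x; simp [le_sub_iff_add_le]
  rw [hpre1, ← h1, Measure.map_apply (measurable_const_mul _) measurableSet_Iic]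
  have hpre2 : (fun x : ℝ => (σ:ℝ) * x) ⁻¹' Iic (t - m) = Iic ((t - m) / σ) := by
    ext x
    simp only [mem_preimage, mem_Iic]
    rw [← le_div_iff₀' hσR]
  rw [hpre2, ← Phi_eq_toReal]

lemma gaussianPDFReal_ratio {v : NNReal} (hv : v ≠ 0) (δ x : ℝ) :
    gaussianPDFReal δ v x = gaussianPDFReal 0 v x * Real.exp ((2 * x * δ - δ ^ 2) / (2 * v)) := by
  have hvR : (0:ℝ) < v := lt_of_le_of_ne v.coe_nonneg (by exact_mod_cast (Ne.symm hv))
  have key : Real.exp (-(x - δ) ^ 2 / (2 * v)) =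
      Real.exp (-(x - 0) ^ 2 / (2 * v)) * Real.exp ((2 * x * δ - δ ^ 2) / (2 * v)) := by
    rw [← Real.exp_add]
    congr 1
    field_simp
    ring
  unfold gaussianPDFReal
  rw [key]
  ring

/-- One-dimensional Gaussian shift bound: if `P(X ∈ S) ≥ p` for `X ~ N(0,σ²)`,
then `P(X + δ ∈ S) ≥ Φ(Φ⁻¹(p) − δ/σ)` for any `δ ≥ 0`. -/
theorem stmt_2 (σ : NNReal) (hσ : 0 < σ) (S : Set ℝ) (hS : MeasurableSet S)
    (p : ℝ) (hp : p ∈ Set.Ioo (0 : ℝ) 1)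
    (h : ((gaussianReal 0 (σ ^ 2)) S).toReal ≥ p) (δ : ℝ) (hδ : 0 ≤ δ) :
    ((gaussianReal 0 (σ ^ 2)) {z | z + δ ∈ S}).toReal ≥ Phi (PhiInv p - δ / σ) := by
  have hσR : (0:ℝ) < σ := hσ
  have hv : (σ ^ 2 : NNReal) ≠ 0 := pow_ne_zero 2 hσ.ne'
  have hvR : (0:ℝ) < (σ ^ 2 : NNReal) := by positivity
  -- rewrite LHS as measure of S under shifted gaussian
  have hmap : (gaussianReal 0 (σ ^ 2)) {z | z + δ ∈ S} = (gaussianReal δ (σ ^ 2)) S := by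
    have := gaussianReal_map_add_const (μ := 0) (v := σ ^ 2) δ
    rw [zero_add] at this
    rw [← this, Measure.map_apply (measurable_add_const δ) hS]
    rfl
  rw [hmap]
  set t₀ : ℝ := σ * PhiInv p with ht₀
  -- values of the half line
  have hI0 : ((gaussianReal 0 (σ ^ 2)) (Iic t₀)).toReal = p := by
    rw [gauss_Iic σ hσ, sub_zero, ht₀, mul_comm, mul_div_assoc, div_self hσR.ne', mul_one,
      Phi_PhiInv hp]
  have hI1 : ((gaussianReal δ (σ ^ 2)) (Iic t₀)).toReal = Phi (PhiInv p - δ / σ) := by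
    rw [gauss_Iic σ hσ]
    congr 1
    field_simp [ht₀]
    ring
  rw [← hI1]
  -- pass to integrals
  rw [gauss_toReal δ hv, gauss_toReal δ hv]
  rw [gauss_toReal 0 hv] at h
  have hI0' : ∫ x in Iic t₀, gaussianPDFReal 0 (σ ^ 2) x = p := by
    rw [← gauss_toReal 0 hv]; exact hI0
  set f₀ : ℝ → ℝ := gaussianPDFReal 0 (σ ^ 2) with hf₀
  set f₁ : ℝ → ℝ := gaussianPDFReal δ (σ ^ 2) with hf₁
  set r : ℝ := Real.exp ((2 * t₀ * δ - δ ^ 2) / (2 * (σ ^ 2 : NNReal))) with hr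
  have hr0 : 0 ≤ r := Real.exp_nonneg _
  have hint0 : Integrable f₀ := integrable_gaussianPDFReal 0 (σ ^ 2)
  have hint1 : Integrable f₁ := integrable_gaussianPDFReal δ (σ ^ 2)
  have hintr : Integrable (fun x => r * f₀ x) := hint0.const_mul r
  have hA : ∀ x : ℝ, t₀ ≤ x → r * f₀ x ≤ f₁ x := by
    intro x hx
    rw [hf₁, gaussianPDFReal_ratio hv, mul_comm r]
    have h1 : (2 * t₀ * δ - δ ^ 2) / (2 * (σ ^ 2 : NNReal)) ≤
        (2 * x * δ - δ ^ 2) / (2 * (σ ^ 2 : NNReal)) := by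
      apply div_le_div_of_nonneg_right ?_ (by positivity) |>.trans_eq rfl
      nlinarith
    exact mul_le_mul_of_nonneg_left (Real.exp_le_exp.2 h1) (gaussianPDFReal_nonneg _ _ _)
  have hB : ∀ x : ℝ, x ≤ t₀ → f₁ x ≤ r * f₀ x := by
    intro x hx
    rw [hf₁, gaussianPDFReal_ratio hv, mul_comm r]
    have h1 : (2 * x * δ - δ ^ 2) / (2 * (σ ^ 2 : NNReal)) ≤
        (2 * t₀ * δ - δ ^ 2) / (2 * (σ ^ 2 : NNReal)) := by
      apply div_le_div_of_nonneg_right ?_ (by positivity) |>.trans_eq rfl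
      nlinarith
    exact mul_le_mul_of_nonneg_left (Real.exp_le_exp.2 h1) (gaussianPDFReal_nonneg _ _ _)
  set I : Set ℝ := Iic t₀ with hIdef
  have hImeas : MeasurableSet I := measurableSet_Iic
  -- splitting
  have split : ∀ (g : ℝ → ℝ), Integrable g →
      (∫ x in S, g x) - ∫ x in I, g x = (∫ x in S \ I, g x) - ∫ x in I \ S, g x := by
    intro g hg
    have h1 : (∫ x in S ∩ I, g x) + ∫ x in S \ I, g x = ∫ x in S, g x :=
      integral_inter_add_diff hImeas hg.integrableOn
    have h2 : (∫ x in I ∩ S, g x) + ∫ x in I \ S, g x = ∫ x in I, g x :=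
      integral_inter_add_diff hS hg.integrableOn
    rw [inter_comm] at h2
    linarith
  have e1 := split f₁ hint1
  have e0 := split f₀ hint0
  have b1 : r * ∫ x in S \ I, f₀ x ≤ ∫ x in S \ I, f₁ x := by
    rw [← integral_const_mul]
    refine setIntegral_mono_on hintr.integrableOn hint1.integrableOn (hS.diff hImeas) ?_
    intro x hx
    exact hA x (le_of_lt (not_le.1 hx.2))
  have b2 : (∫ x in I \ S, f₁ x) ≤ r * ∫ x in I \ S, f₀ x := by
    rw [← integral_const_mul]
    refine setIntegral_mono_on hint1.integrableOn hintr.integrableOn (hImeas.diff hS) ?_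
    intro x hx
    exact hB x hx.1
  have hfin : 0 ≤ r * ((∫ x in S, f₀ x) - ∫ x in I, f₀ x) := by
    apply mul_nonneg hr0
    rw [hI0']
    linarith
  have : r * ((∫ x in S, f₀ x) - ∫ x in I, f₀ x) =
      r * (∫ x in S \ I, f₀ x) - r * (∫ x in I \ S, f₀ x) := by rw [e0]; ring
  linarith
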